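/- Limiting equivalence of Soft QD Score and the sum of qualities: let f_1, …, f_N ≥ 0 and distinct b_1, …, b_N ∈ ℝ^d. Define S(σ) = ∫_{ℝ^d} max_{1≤n≤N} f_n exp(−‖b − b_n‖²/(2σ²)) db. Then lim_{σ→0⁺} S(σ)/(2πσ²)^{d/2} = Σ_{n=1}^{N} f_n. -/

import Mathlib

open MeasureTheory Real Finset Filter

section Aux

variable {d : ℕ}

/-- Integrability of a centered Gaussian on Euclidean space. -/
lemma gauss_integrable {s : ℝ} (hs : 0 < s) (a : EuclideanSpace ℝ (Fin d)) :
    Integrable (fun b : EuclideanSpace ℝ (Fin d) => rexp (-‖b - a‖ ^ 2 / s)) := by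
  have hc : (0 : ℝ) < ((s⁻¹ : ℝ) : ℂ).re := by
    simpa using inv_pos.mpr hs
  have h0 : Integrable
      (fun b : EuclideanSpace ℝ (Fin d) => rexp (-‖b‖ ^ 2 / s)) := by
    have h := (GaussianFourier.integrable_cexp_neg_mul_sq_norm_add (V := EuclideanSpace ℝ (Fin d))
      hc 0 0).norm
    refine h.congr (Filter.Eventually.of_forall fun b => ?_)
    simp only [Complex.norm_exp]
    congr 1
    simp [← Complex.ofReal_pow]
    ring
  exact (h0.comp_sub_right a)

/-- Value of a centered Gaussian integral on Euclidean space. -/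
lemma gauss_integral {s : ℝ} (hs : 0 < s) (a : EuclideanSpace ℝ (Fin d)) :
    ∫ b : EuclideanSpace ℝ (Fin d), rexp (-‖b - a‖ ^ 2 / s) = (π * s) ^ ((d : ℝ) / 2) := by
  have h1 : (∫ b : EuclideanSpace ℝ (Fin d), rexp (-‖b - a‖ ^ 2 / s))
      = ∫ b : EuclideanSpace ℝ (Fin d), rexp (-(s⁻¹) * ‖b‖ ^ 2) := by
    rw [← integral_sub_right_eq_self (μ := volume)
      (fun x : EuclideanSpace ℝ (Fin d) => rexp (-(s⁻¹) * ‖x‖ ^ 2)) a]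
    congr 1 with b
    congr 1
    ring
  rw [h1, GaussianFourier.integral_rexp_neg_mul_sq_norm (inv_pos.mpr hs)]
  have hps : π / s⁻¹ = π * s := by field_simp
  rw [hps, finrank_euclideanSpace_fin]

/-- Parallelogram-type identity. -/
lemma para_norm (b a c : EuclideanSpace ℝ (Fin d)) :
    ‖b - a‖ ^ 2 + ‖b - c‖ ^ 2
      = 2 * ‖b - (2:ℝ)⁻¹ • (a + c)‖ ^ 2 + ‖a - c‖ ^ 2 / 2 := by
  have h := parallelogram_law_with_norm ℝ
    (b - (2:ℝ)⁻¹ • (a + c)) ((2:ℝ)⁻¹ • (a - c))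
  have e1 : b - (2:ℝ)⁻¹ • (a + c) + (2:ℝ)⁻¹ • (a - c) = b - c := by module
  have e2 : b - (2:ℝ)⁻¹ • (a + c) - (2:ℝ)⁻¹ • (a - c) = b - a := by module
  rw [e1, e2] at h
  have e3 : ‖(2:ℝ)⁻¹ • (a - c)‖ = (2:ℝ)⁻¹ * ‖a - c‖ := by
    rw [norm_smul]; norm_num
  rw [e3] at h
  nlinarith [h]

/-- The key pairwise bound. -/
lemma pair_bound {σ : ℝ} (hσ : 0 < σ) {u v : ℝ} (hu : 0 ≤ u) (hv : 0 ≤ v)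
    (p q b : EuclideanSpace ℝ (Fin d))
    (hle : u * rexp (-‖b - p‖ ^ 2 / (2 * σ ^ 2)) ≤ v * rexp (-‖b - q‖ ^ 2 / (2 * σ ^ 2))) :
    u * rexp (-‖b - p‖ ^ 2 / (2 * σ ^ 2)) ≤
      Real.sqrt (u * v) * rexp (-‖p - q‖ ^ 2 / (8 * σ ^ 2))
        * rexp (-‖b - (2:ℝ)⁻¹ • (p + q)‖ ^ 2 / (2 * σ ^ 2)) := by
  set x := u * rexp (-‖b - p‖ ^ 2 / (2 * σ ^ 2)) with hx
  set y := v * rexp (-‖b - q‖ ^ 2 / (2 * σ ^ 2)) with hy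
  have hx0 : 0 ≤ x := by positivity
  have h1 : x ≤ Real.sqrt (x * y) := by
    calc x = Real.sqrt (x ^ 2) := (Real.sqrt_sq hx0).symm
      _ ≤ Real.sqrt (x * y) := Real.sqrt_le_sqrt (by nlinarith)
  have h2 : Real.sqrt (x * y)
      = Real.sqrt (u * v) * Real.sqrt
        (rexp (-‖b - p‖ ^ 2 / (2 * σ ^ 2)) * rexp (-‖b - q‖ ^ 2 / (2 * σ ^ 2))) := by
    rw [← Real.sqrt_mul (by positivity)]
    congr 1
    rw [hx, hy]; ring
  have h3 : Real.sqrt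
      (rexp (-‖b - p‖ ^ 2 / (2 * σ ^ 2)) * rexp (-‖b - q‖ ^ 2 / (2 * σ ^ 2)))
      = rexp (-‖p - q‖ ^ 2 / (8 * σ ^ 2))
        * rexp (-‖b - (2:ℝ)⁻¹ • (p + q)‖ ^ 2 / (2 * σ ^ 2)) := by
    rw [← Real.exp_add, ← Real.exp_half, ← Real.exp_add]
    congr 1
    have hAB := para_norm b p q
    calc (-‖b - p‖ ^ 2 / (2 * σ ^ 2) + -‖b - q‖ ^ 2 / (2 * σ ^ 2)) / 2
        = -(‖b - p‖ ^ 2 + ‖b - q‖ ^ 2) / (4 * σ ^ 2) := by ring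
      _ = -(2 * ‖b - (2:ℝ)⁻¹ • (p + q)‖ ^ 2 + ‖p - q‖ ^ 2 / 2) / (4 * σ ^ 2) := by
          rw [hAB]
      _ = -‖p - q‖ ^ 2 / (8 * σ ^ 2) + -‖b - (2:ℝ)⁻¹ • (p + q)‖ ^ 2 / (2 * σ ^ 2) := by
          ring
  calc x ≤ Real.sqrt (x * y) := h1
    _ = _ := by rw [h2, h3, mul_assoc]

/-- The exponential error term tends to zero. -/
lemma exp_term_tendsto {D : ℝ} (hD : 0 < D) :
    Tendsto (fun σ : ℝ => rexp (-D / (8 * σ ^ 2))) (nhdsWithin 0 (Set.Ioi 0)) (nhds 0) := by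
  have h1 : Tendsto (fun σ : ℝ => 8 * σ ^ 2) (nhdsWithin 0 (Set.Ioi 0))
      (nhdsWithin 0 (Set.Ioi 0)) := by
    rw [tendsto_nhdsWithin_iff]
    constructor
    · have hcont : Continuous (fun σ : ℝ => 8 * σ ^ 2) := by fun_prop
      exact (hcont.tendsto' 0 0 (by norm_num)).mono_left nhdsWithin_le_nhds
    · exact eventually_mem_nhdsWithin.mono fun σ hσ => by
        have : (0:ℝ) < σ := hσ
        exact Set.mem_Ioi.mpr (by positivity)
  have h2 : Tendsto (fun σ : ℝ => (8 * σ ^ 2)⁻¹) (nhdsWithin 0 (Set.Ioi 0)) atTop :=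
    tendsto_inv_nhdsGT_zero.comp h1
  have h3 : Tendsto (fun σ : ℝ => D * (8 * σ ^ 2)⁻¹) (nhdsWithin 0 (Set.Ioi 0)) atTop :=
    h2.const_mul_atTop hD
  have h4 : Tendsto (fun σ : ℝ => -(D * (8 * σ ^ 2)⁻¹)) (nhdsWithin 0 (Set.Ioi 0)) atBot :=
    tendsto_neg_atTop_atBot.comp h3
  have h5 := Real.tendsto_exp_atBot.comp h4
  refine h5.congr fun σ => ?_
  rw [Function.comp_apply, div_eq_mul_inv, neg_mul]

end Aux

theorem softQD_limiting_equivalence (d N : ℕ) (hN : 0 < N)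
    (f : Fin N → ℝ) (hf : ∀ n, 0 ≤ f n)
    (bb : Fin N → EuclideanSpace ℝ (Fin d)) (hb : Function.Injective bb) :
    Filter.Tendsto
      (fun σ : ℝ =>
        (∫ b : EuclideanSpace ℝ (Fin d),
            Finset.univ.sup' (Finset.univ_nonempty_iff.mpr ⟨⟨0, hN⟩⟩)
              (fun n : Fin N => f n * Real.exp (-‖b - bb n‖ ^ 2 / (2 * σ ^ 2)))) /
          (2 * π * σ ^ 2) ^ ((d : ℝ) / 2))
      (nhdsWithin 0 (Set.Ioi 0)) (nhds (∑ n, f n)) := by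
  have hne : (Finset.univ : Finset (Fin N)).Nonempty :=
    Finset.univ_nonempty_iff.mpr ⟨⟨0, hN⟩⟩
  set T : ℝ := ∑ n, f n with hT
  set Err : ℝ → ℝ := fun σ => ∑ n, ∑ m ∈ Finset.univ.erase n,
      Real.sqrt (f n * f m) * rexp (-‖bb n - bb m‖ ^ 2 / (8 * σ ^ 2)) with hErrDef
  set S : ℝ → ℝ := fun σ =>
      (∫ b : EuclideanSpace ℝ (Fin d),
          Finset.univ.sup' (Finset.univ_nonempty_iff.mpr ⟨⟨0, hN⟩⟩)
            (fun n : Fin N => f n * Real.exp (-‖b - bb n‖ ^ 2 / (2 * σ ^ 2)))) /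
        (2 * π * σ ^ 2) ^ ((d : ℝ) / 2) with hSDef
  -- main bounds for σ > 0
  have key : ∀ σ : ℝ, σ ∈ Set.Ioi (0:ℝ) → T - Err σ ≤ S σ ∧ S σ ≤ T := by
    intro σ hσ
    have hσ0 : (0:ℝ) < σ := hσ
    have hs2 : (0:ℝ) < 2 * σ ^ 2 := by positivity
    have hC : (0:ℝ) < (2 * π * σ ^ 2) ^ ((d : ℝ) / 2) :=
      Real.rpow_pos_of_pos (by positivity) _
    set C : ℝ := (2 * π * σ ^ 2) ^ ((d : ℝ) / 2) with hCdef
    set g : Fin N → EuclideanSpace ℝ (Fin d) → ℝ :=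
      fun n b => f n * rexp (-‖b - bb n‖ ^ 2 / (2 * σ ^ 2)) with hgdef
    have hg0 : ∀ n b, 0 ≤ g n b := fun n b => by
      have := hf n; positivity
    have hgint : ∀ n, Integrable (g n) :=
      fun n => (gauss_integrable hs2 (bb n)).const_mul (f n)
    have hgval : ∀ n, ∫ b, g n b = f n * C := by
      intro n
      rw [hgdef]
      simp only
      rw [integral_const_mul, gauss_integral hs2 (bb n), hCdef]
      congr 2
      ring
    have hsumint : Integrable (fun b => ∑ n, g n b) :=
      integrable_finset_sum _ fun n _ => hgint n
    set F : EuclideanSpace ℝ (Fin d) → ℝ :=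
      fun b => Finset.univ.sup' hne (fun n => g n b) with hFdef
    have hFcont : Continuous F := by
      rw [continuous_iff_continuousAt]
      intro b
      apply Filter.Tendsto.finset_sup'_nhds_apply hne
      intro n _
      have : Continuous (g n) := by
        apply continuous_const.mul
        apply Real.continuous_exp.comp
        exact ((((continuous_id.sub continuous_const).norm.pow 2).neg).div_const _)
      exact this.continuousAt
    have hF0 : ∀ b, 0 ≤ F b := by
      intro b
      exact le_trans (hg0 ⟨0, hN⟩ b)
        (Finset.le_sup' (fun n => g n b) (Finset.mem_univ ⟨0, hN⟩))
    have hFle : ∀ b, F b ≤ ∑ n, g n b := by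
      intro b
      exact Finset.sup'_le _ _ fun n _ =>
        Finset.single_le_sum (fun m _ => hg0 m b) (Finset.mem_univ n)
    have hFint : Integrable F := by
      refine hsumint.mono hFcont.aestronglyMeasurable
        (Filter.Eventually.of_forall fun b => ?_)
      rw [Real.norm_eq_abs, Real.norm_eq_abs, abs_of_nonneg (hF0 b),
        abs_of_nonneg (Finset.sum_nonneg fun n _ => hg0 n b)]
      exact hFle b
    -- upper bound
    have hupper : ∫ b, F b ≤ T * C := by
      calc ∫ b, F b ≤ ∫ b, ∑ n, g n b :=
            integral_mono hFint hsumint hFle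
        _ = ∑ n, ∫ b, g n b := integral_finset_sum _ fun n _ => hgint n
        _ = ∑ n, f n * C := by simp_rw [hgval]
        _ = T * C := by rw [hT, Finset.sum_mul]
    -- the overlap functions
    set Q : EuclideanSpace ℝ (Fin d) → ℝ := fun b =>
      ∑ n, ∑ m ∈ Finset.univ.erase n,
        Real.sqrt (f n * f m) * rexp (-‖bb n - bb m‖ ^ 2 / (8 * σ ^ 2))
          * rexp (-‖b - (2:ℝ)⁻¹ • (bb n + bb m)‖ ^ 2 / (2 * σ ^ 2)) with hQdef
    have hQint : Integrable Q := by
      apply integrable_finset_sum _ fun n _ => ?_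
      apply integrable_finset_sum _ fun m _ => ?_
      exact (gauss_integrable hs2 _).const_mul _
    have hQ0 : ∀ n m (b : EuclideanSpace ℝ (Fin d)), 0 ≤
        Real.sqrt (f n * f m) * rexp (-‖bb n - bb m‖ ^ 2 / (8 * σ ^ 2))
          * rexp (-‖b - (2:ℝ)⁻¹ • (bb n + bb m)‖ ^ 2 / (2 * σ ^ 2)) := by
      intro n m b; positivity
    -- pointwise lower bound
    have hpoint : ∀ b, ∑ n, g n b ≤ F b + Q b := by
      intro b
      obtain ⟨k, -, hk⟩ := Finset.exists_mem_eq_sup' hne (fun n => g n b)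
      have hsum : ∑ n, g n b = g k b + ∑ n ∈ Finset.univ.erase k, g n b :=
        (Finset.add_sum_erase Finset.univ (fun n => g n b) (Finset.mem_univ k)).symm
      have hFb : F b = g k b := hk
      rw [hsum, hFb]
      gcongr
      calc ∑ n ∈ Finset.univ.erase k, g n b
          ≤ ∑ n ∈ Finset.univ.erase k,
              Real.sqrt (f n * f k) * rexp (-‖bb n - bb k‖ ^ 2 / (8 * σ ^ 2))
                * rexp (-‖b - (2:ℝ)⁻¹ • (bb n + bb k)‖ ^ 2 / (2 * σ ^ 2)) := by
            refine Finset.sum_le_sum fun n _ => ?_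
            refine pair_bound hσ0 (hf n) (hf k) (bb n) (bb k) b ?_
            exact le_trans (Finset.le_sup' (fun i => g i b) (Finset.mem_univ n))
              (le_of_eq hk)
        _ ≤ ∑ n ∈ Finset.univ.erase k, ∑ m ∈ Finset.univ.erase n,
              Real.sqrt (f n * f m) * rexp (-‖bb n - bb m‖ ^ 2 / (8 * σ ^ 2))
                * rexp (-‖b - (2:ℝ)⁻¹ • (bb n + bb m)‖ ^ 2 / (2 * σ ^ 2)) := by
            refine Finset.sum_le_sum fun n hn => ?_
            have hkn : k ∈ Finset.univ.erase n := by
              rw [Finset.mem_erase] at hn ⊢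
              exact ⟨fun h => hn.1 h.symm, Finset.mem_univ k⟩
            exact Finset.single_le_sum (fun m _ => hQ0 n m b) hkn
        _ ≤ Q b := by
            refine Finset.sum_le_sum_of_subset_of_nonneg
              (Finset.erase_subset _ _) fun n _ _ => ?_
            exact Finset.sum_nonneg fun m _ => hQ0 n m b
    -- integrate the lower bound
    have hQval : ∫ b, Q b = Err σ * C := by
      simp only [hQdef]
      rw [integral_finset_sum _ fun n _ =>
        integrable_finset_sum _ fun m _ => (gauss_integrable hs2 _).const_mul _]
      simp only [hErrDef]
      rw [Finset.sum_mul]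
      refine Finset.sum_congr rfl fun n _ => ?_
      rw [integral_finset_sum _ fun m _ => (gauss_integrable hs2 _).const_mul _,
        Finset.sum_mul]
      refine Finset.sum_congr rfl fun m _ => ?_
      rw [integral_const_mul, gauss_integral hs2, hCdef,
        show π * (2 * σ ^ 2) = 2 * π * σ ^ 2 from by ring]
    have hlower : T * C - Err σ * C ≤ ∫ b, F b := by
      have h1 : ∫ b, ∑ n, g n b ≤ ∫ b, (F b + Q b) :=
        integral_mono hsumint (hFint.add hQint) hpoint
      rw [integral_add hFint hQint, hQval] at h1
      have h2 : ∫ b, ∑ n, g n b = T * C := by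
        rw [integral_finset_sum _ fun n _ => hgint n]
        simp_rw [hgval]
        rw [hT, Finset.sum_mul]
      linarith [h1, h2 ▸ h1]
    have hSσ : S σ = (∫ b, F b) / C := rfl
    constructor
    · rw [hSσ, le_div_iff₀ hC]
      calc (T - Err σ) * C = T * C - Err σ * C := by ring
        _ ≤ ∫ b, F b := hlower
    · rw [hSσ, div_le_iff₀ hC]
      exact hupper
  -- Err tends to 0
  have hErr : Tendsto Err (nhdsWithin 0 (Set.Ioi 0)) (nhds 0) := by
    simp only [hErrDef]
    have : Tendsto (fun σ : ℝ => ∑ n : Fin N, ∑ m ∈ Finset.univ.erase n,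
        Real.sqrt (f n * f m) * rexp (-‖bb n - bb m‖ ^ 2 / (8 * σ ^ 2)))
        (nhdsWithin 0 (Set.Ioi 0))
        (nhds (∑ n : Fin N, ∑ m ∈ Finset.univ.erase n, (0:ℝ))) := by
      apply tendsto_finset_sum
      intro n _
      apply tendsto_finset_sum
      intro m hm
      have hnm : bb n ≠ bb m := fun h => (Finset.mem_erase.mp hm).1 (hb h.symm)
      have hD : (0:ℝ) < ‖bb n - bb m‖ ^ 2 := by
        have h0 : bb n - bb m ≠ 0 := sub_ne_zero.mpr hnm
        have h1 : 0 < ‖bb n - bb m‖ := norm_pos_iff.mpr h0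
        positivity
      have := (exp_term_tendsto hD).const_mul (Real.sqrt (f n * f m))
      simpa using this
    simpa using this
  -- squeeze
  refine tendsto_of_tendsto_of_tendsto_of_le_of_le'
    (g := fun σ => T - Err σ) (h := fun _ => T) ?_ ?_ ?_ ?_
  · have hconst : Tendsto (fun _ : ℝ => T) (nhdsWithin 0 (Set.Ioi 0)) (nhds T) :=
      tendsto_const_nhds
    simpa using hconst.sub hErr
  · exact tendsto_const_nhds
  · exact eventually_mem_nhdsWithin.mono fun σ hσ => (key σ hσ).1
  · exact eventually_mem_nhdsWithin.mono fun σ hσ => (key σ hσ).2
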